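/- Let H be a cocommutative Hopf algebra, G ⊆ H a Hopf subalgebra and K ⊆ H a Hopf subalgebra such that H = GK and the multiplication map G⊗K → H is a linear isomorphism. Define B : H → H on elements x = hg (h ∈ G, g ∈ K) by B(hg) = ε(h)S(g). Then B is a well-defined Rota-Baxter operator on H. -/

import Mathlib

open scoped TensorProduct
open Coalgebra

variable (R H : Type*) [CommRing R] [AddCommGroup H] [Module R H] [Coalgebra R H]

/-- A Hopf algebra structure (multiplication, unit, antipode) on the coalgebra `H`:
the multiplication is associative with unit, comultiplication and counit are algebra
maps, and `S` is an antipode (expressed via arbitrary Sweedler representations). -/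
structure HopfMul where
  mul : H →ₗ[R] H →ₗ[R] H
  one : H
  S : H →ₗ[R] H
  mul_assoc : ∀ a b c : H, mul (mul a b) c = mul a (mul b c)
  one_mul : ∀ a : H, mul one a = a
  mul_one : ∀ a : H, mul a one = a
  comul_mul : ∀ (a b : H) {ια ιβ : Type*} (ra : Coalgebra.Repr R a ια) (rb : Coalgebra.Repr R b ιβ),
    comul (R := R) (mul a b) = ∑ i ∈ ra.index, ∑ j ∈ rb.index,
      mul (ra.left i) (rb.left j) ⊗ₜ[R] mul (ra.right i) (rb.right j)
  comul_one : comul (R := R) one = one ⊗ₜ[R] one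
  counit_mul : ∀ a b : H, counit (R := R) (mul a b) = counit (R := R) a * counit (R := R) b
  counit_one : counit (R := R) one = 1
  S_mul_left : ∀ (a : H) {ι : Type*} (r : Coalgebra.Repr R a ι),
    ∑ i ∈ r.index, mul (S (r.left i)) (r.right i) = counit (R := R) a • one
  S_mul_right : ∀ (a : H) {ι : Type*} (r : Coalgebra.Repr R a ι),
    ∑ i ∈ r.index, mul (r.left i) (S (r.right i)) = counit (R := R) a • one

/-- Cocommutativity of the coalgebra `H`. -/
def Cocomm : Prop :=
  ∀ a : H, TensorProduct.comm R H H (comul (R := R) a) = comul (R := R) a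

/-- A Rota-Baxter operator on the (cocommutative) Hopf algebra `(H, h)`: a coalgebra
homomorphism `B` satisfying `B(a)B(b) = B(a₍₁₎·B(a₍₂₎)·b·S(B(a₍₃₎)))`. -/
structure RotaBaxter (h : HopfMul R H) where
  B : H →ₗ[R] H
  comul_B : ∀ (a : H) {ι : Type*} (r : Coalgebra.Repr R a ι),
    comul (R := R) (B a) = ∑ i ∈ r.index, B (r.left i) ⊗ₜ[R] B (r.right i)
  counit_B : ∀ a : H, counit (R := R) (B a) = counit (R := R) a
  rb : ∀ (a b : H) {ι : Type*} (r : Coalgebra.Repr R a ι)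
      {κ : ι → Type*} (r2 : ∀ i : ι, Coalgebra.Repr R (r.right i) (κ i)),
    h.mul (B a) (B b) = ∑ i ∈ r.index, ∑ j ∈ (r2 i).index,
      B (h.mul (h.mul (h.mul (r.left i) (B ((r2 i).left j))) b)
        (h.S (B ((r2 i).right j))))


/-! ### Auxiliary machinery -/

namespace FactRB

open TensorProduct LinearMap Coalgebra

section ReprLemmas

variable {R : Type*} [CommRing R] {C : Type*} [AddCommGroup C] [Module R C]
  [CoalgebraStruct R C]

/-- Apply a linear map on the tensor square to a representation of `comul a`. -/
lemma repr_map_sum {V : Type*} [AddCommGroup V] [Module R V] {a : C}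
    {ι : Type*} (r : Coalgebra.Repr R a ι) (F : C ⊗[R] C →ₗ[R] V) :
    ∑ i ∈ r.index, F (r.left i ⊗ₜ[R] r.right i) = F (comul (R := R) a) := by
  rw [← r.eq, map_sum]

end ReprLemmas

section CoalgLemmas

variable {R : Type*} [CommRing R] {C : Type*} [AddCommGroup C] [Module R C]
  [Coalgebra R C]

lemma sum_counit_smul {a : C} {ι : Type*} (r : Coalgebra.Repr R a ι) :
    ∑ i ∈ r.index, counit (R := R) (r.left i) • r.right i = a := by
  calc ∑ i ∈ r.index, counit (R := R) (r.left i) • r.right i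
      = TensorProduct.lid R C (∑ i ∈ r.index,
          counit (R := R) (r.left i) ⊗ₜ[R] r.right i) := by rw [map_sum]; simp
    _ = TensorProduct.lid R C ((1 : R) ⊗ₜ[R] a) := by
        rw [Coalgebra.sum_counit_tmul_eq r]
    _ = a := by simp

lemma sum_smul_counit {a : C} {ι : Type*} (r : Coalgebra.Repr R a ι) :
    ∑ i ∈ r.index, counit (R := R) (r.right i) • r.left i = a := by
  calc ∑ i ∈ r.index, counit (R := R) (r.right i) • r.left i
      = TensorProduct.rid R C (∑ i ∈ r.index,
          r.left i ⊗ₜ[R] counit (R := R) (r.right i)) := by rw [map_sum]; simp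
    _ = TensorProduct.rid R C (a ⊗ₜ[R] (1 : R)) := by
        rw [Coalgebra.sum_tmul_counit_eq r]
    _ = a := by simp

lemma sum_counit_mul {a : C} {ι : Type*} (r : Coalgebra.Repr R a ι) :
    ∑ i ∈ r.index, counit (R := R) (r.left i) * counit (R := R) (r.right i)
      = counit (R := R) a := by
  conv_rhs => rw [← sum_counit_smul r]
  rw [map_sum]
  simp [smul_eq_mul]

end CoalgLemmas


section Conv

variable {R : Type*} [CommRing R] {C : Type*} [AddCommGroup C] [Module R C]
  [CoalgebraStruct R C] {A : Type*} [AddCommGroup A] [Module R A]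

/-- Convolution product on linear maps from a coalgebra to an "algebra" `(A, MA)`. -/
noncomputable def conv (MA : A ⊗[R] A →ₗ[R] A) (f g : C →ₗ[R] A) : C →ₗ[R] A :=
  MA ∘ₗ TensorProduct.map f g ∘ₗ comul

/-- The convolution unit. -/
noncomputable def cunit (eA : A) : C →ₗ[R] A :=
  LinearMap.toSpanSingleton R A eA ∘ₗ counit

lemma cunit_apply (eA : A) (c : C) :
    (cunit eA : C →ₗ[R] A) c = counit (R := R) c • eA := rfl

lemma conv_apply (MA : A ⊗[R] A →ₗ[R] A) (f g : C →ₗ[R] A) {c : C}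
    {ι : Type*} (r : Coalgebra.Repr R c ι) :
    conv MA f g c = ∑ i ∈ r.index, MA (f (r.left i) ⊗ₜ[R] g (r.right i)) := by
  rw [conv, LinearMap.comp_apply, LinearMap.comp_apply, ← r.eq, map_sum, map_sum]
  simp

/-- coassociativity at the level of representations. -/
lemma sum_ttt (hco : ↑(TensorProduct.assoc R C C C) ∘ₗ
      (comul (R := R) (A := C)).rTensor C ∘ₗ comul = (comul (R := R)).lTensor C ∘ₗ comul)
    {c : C} {ι : Type*} (r : Coalgebra.Repr R c ι)
    {κ Λ : ι → Type*} (r1 : ∀ i : ι, Coalgebra.Repr R (r.left i) (κ i))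
    (r2 : ∀ i : ι, Coalgebra.Repr R (r.right i) (Λ i)) :
    ∑ i ∈ r.index, ∑ j ∈ (r1 i).index,
        (r1 i).left j ⊗ₜ[R] ((r1 i).right j ⊗ₜ[R] r.right i)
      = ∑ i ∈ r.index, ∑ j ∈ (r2 i).index,
        r.left i ⊗ₜ[R] ((r2 i).left j ⊗ₜ[R] (r2 i).right j) := by
  have h1 := LinearMap.congr_fun hco c
  simp only [LinearMap.comp_apply] at h1
  rw [← r.eq] at h1
  simp only [map_sum, LinearMap.rTensor_tmul, LinearMap.lTensor_tmul] at h1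
  calc ∑ i ∈ r.index, ∑ j ∈ (r1 i).index,
        (r1 i).left j ⊗ₜ[R] ((r1 i).right j ⊗ₜ[R] r.right i)
      = ∑ i ∈ r.index,
          (TensorProduct.assoc R C C C) (comul (R := R) (r.left i) ⊗ₜ[R] r.right i) := by
        refine Finset.sum_congr rfl fun i _ => ?_
        rw [← (r1 i).eq]
        simp [TensorProduct.sum_tmul]
    _ = ∑ i ∈ r.index, r.left i ⊗ₜ[R] comul (R := R) (r.right i) := h1
    _ = _ := by
        refine Finset.sum_congr rfl fun i _ => ?_
        rw [← (r2 i).eq]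
        simp [TensorProduct.tmul_sum]

lemma sum_counit_smul' (hcl : (counit (R := R) (A := C)).rTensor C ∘ₗ comul
      = TensorProduct.mk R R C 1) {c : C} {ι : Type*} (r : Coalgebra.Repr R c ι) :
    ∑ i ∈ r.index, counit (R := R) (r.left i) • r.right i = c := by
  have h1 := LinearMap.congr_fun hcl c
  simp only [LinearMap.comp_apply] at h1
  rw [← r.eq, map_sum] at h1
  simp only [LinearMap.rTensor_tmul] at h1
  calc ∑ i ∈ r.index, counit (R := R) (r.left i) • r.right i
      = TensorProduct.lid R C (∑ i ∈ r.index,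
          counit (R := R) (r.left i) ⊗ₜ[R] r.right i) := by rw [map_sum]; simp
    _ = TensorProduct.lid R C (TensorProduct.mk R R C 1 c) := by rw [h1]
    _ = c := by simp [TensorProduct.mk_apply]

lemma sum_smul_counit' (hcr : (counit (R := R) (A := C)).lTensor C ∘ₗ comul
      = (TensorProduct.mk R C R).flip 1) {c : C} {ι : Type*} (r : Coalgebra.Repr R c ι) :
    ∑ i ∈ r.index, counit (R := R) (r.right i) • r.left i = c := by
  have h1 := LinearMap.congr_fun hcr c
  simp only [LinearMap.comp_apply] at h1
  rw [← r.eq, map_sum] at h1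
  simp only [LinearMap.lTensor_tmul] at h1
  calc ∑ i ∈ r.index, counit (R := R) (r.right i) • r.left i
      = TensorProduct.rid R C (∑ i ∈ r.index,
          r.left i ⊗ₜ[R] counit (R := R) (r.right i)) := by rw [map_sum]; simp
    _ = TensorProduct.rid R C ((TensorProduct.mk R C R).flip 1 c) := by rw [h1]
    _ = c := by simp

variable (MA : A ⊗[R] A →ₗ[R] A) (eA : A)

lemma conv_one_left (hcl : (counit (R := R) (A := C)).rTensor C ∘ₗ comul
      = TensorProduct.mk R R C 1) (hml : ∀ x : A, MA (eA ⊗ₜ[R] x) = x) (f : C →ₗ[R] A) :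
    conv MA (cunit eA) f = f := by
  ext c
  rw [conv_apply MA _ f (Coalgebra.Repr.arbitrary R c)]
  set r := Coalgebra.Repr.arbitrary R c
  calc ∑ i ∈ r.index, MA ((cunit eA : C →ₗ[R] A) (r.left i) ⊗ₜ[R] f (r.right i))
      = ∑ i ∈ r.index, counit (R := R) (r.left i) • f (r.right i) := by
        refine Finset.sum_congr rfl fun i _ => ?_
        rw [cunit_apply, ← TensorProduct.smul_tmul', map_smul, hml]
    _ = f (∑ i ∈ r.index, counit (R := R) (r.left i) • r.right i) := by
        rw [map_sum]; simp
    _ = f c := by rw [sum_counit_smul' hcl r]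

lemma conv_one_right (hcr : (counit (R := R) (A := C)).lTensor C ∘ₗ comul
      = (TensorProduct.mk R C R).flip 1) (hmr : ∀ x : A, MA (x ⊗ₜ[R] eA) = x) (f : C →ₗ[R] A) :
    conv MA f (cunit eA) = f := by
  ext c
  rw [conv_apply MA f _ (Coalgebra.Repr.arbitrary R c)]
  set r := Coalgebra.Repr.arbitrary R c
  calc ∑ i ∈ r.index, MA (f (r.left i) ⊗ₜ[R] (cunit eA : C →ₗ[R] A) (r.right i))
      = ∑ i ∈ r.index, counit (R := R) (r.right i) • f (r.left i) := by
        refine Finset.sum_congr rfl fun i _ => ?_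
        rw [cunit_apply, TensorProduct.tmul_smul, map_smul, hmr]
    _ = f (∑ i ∈ r.index, counit (R := R) (r.right i) • r.left i) := by
        rw [map_sum]; simp
    _ = f c := by rw [sum_smul_counit' hcr r]

lemma conv_assoc (hco : ↑(TensorProduct.assoc R C C C) ∘ₗ
      (comul (R := R) (A := C)).rTensor C ∘ₗ comul = (comul (R := R)).lTensor C ∘ₗ comul)
    (hma : ∀ x y z : A, MA (MA (x ⊗ₜ[R] y) ⊗ₜ[R] z) = MA (x ⊗ₜ[R] MA (y ⊗ₜ[R] z)))
    (f g k : C →ₗ[R] A) :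
    conv MA (conv MA f g) k = conv MA f (conv MA g k) := by
  ext c
  set r := Coalgebra.Repr.arbitrary R c
  set r1 : ∀ i : C × C, Coalgebra.Repr R (r.left i) (C × C) :=
    fun i => Coalgebra.Repr.arbitrary R (r.left i)
  set r2 : ∀ i : C × C, Coalgebra.Repr R (r.right i) (C × C) :=
    fun i => Coalgebra.Repr.arbitrary R (r.right i)
  set T : C ⊗[R] (C ⊗[R] C) →ₗ[R] A :=
    MA ∘ₗ TensorProduct.map f (MA ∘ₗ TensorProduct.map g k) with hT
  have hTval : ∀ x y z : C, T (x ⊗ₜ[R] (y ⊗ₜ[R] z)) = MA (f x ⊗ₜ[R] MA (g y ⊗ₜ[R] k z)) := by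
    intro x y z; simp [hT]
  have key := congrArg T (sum_ttt hco r r1 r2)
  simp only [map_sum, hTval] at key
  calc (conv MA (conv MA f g) k : C →ₗ[R] A) c
      = ∑ i ∈ r.index, MA ((conv MA f g) (r.left i) ⊗ₜ[R] k (r.right i)) :=
        conv_apply MA _ k r
    _ = ∑ i ∈ r.index, ∑ j ∈ (r1 i).index,
          MA (MA (f ((r1 i).left j) ⊗ₜ[R] g ((r1 i).right j)) ⊗ₜ[R] k (r.right i)) := by
        refine Finset.sum_congr rfl fun i _ => ?_
        rw [conv_apply MA f g (r1 i), TensorProduct.sum_tmul, map_sum]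
    _ = ∑ i ∈ r.index, ∑ j ∈ (r1 i).index,
          MA (f ((r1 i).left j) ⊗ₜ[R] MA (g ((r1 i).right j) ⊗ₜ[R] k (r.right i))) := by
        refine Finset.sum_congr rfl fun i _ => Finset.sum_congr rfl fun j _ => hma _ _ _
    _ = ∑ i ∈ r.index, ∑ j ∈ (r2 i).index,
          MA (f (r.left i) ⊗ₜ[R] MA (g ((r2 i).left j) ⊗ₜ[R] k ((r2 i).right j))) := key
    _ = ∑ i ∈ r.index, MA (f (r.left i) ⊗ₜ[R] (conv MA g k) (r.right i)) := by
        refine Finset.sum_congr rfl fun i _ => ?_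
        rw [conv_apply MA g k (r2 i), TensorProduct.tmul_sum, map_sum, ← map_sum]
    _ = (conv MA f (conv MA g k) : C →ₗ[R] A) c := (conv_apply MA f _ r).symm

lemma conv_unique (hco : ↑(TensorProduct.assoc R C C C) ∘ₗ
      (comul (R := R) (A := C)).rTensor C ∘ₗ comul = (comul (R := R)).lTensor C ∘ₗ comul)
    (hcl : (counit (R := R) (A := C)).rTensor C ∘ₗ comul = TensorProduct.mk R R C 1)
    (hcr : (counit (R := R) (A := C)).lTensor C ∘ₗ comul = (TensorProduct.mk R C R).flip 1)
    (hma : ∀ x y z : A, MA (MA (x ⊗ₜ[R] y) ⊗ₜ[R] z) = MA (x ⊗ₜ[R] MA (y ⊗ₜ[R] z)))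
    (hml : ∀ x : A, MA (eA ⊗ₜ[R] x) = x) (hmr : ∀ x : A, MA (x ⊗ₜ[R] eA) = x)
    (f g g' : C →ₗ[R] A) (h1 : conv MA f g = cunit eA) (h2 : conv MA g' f = cunit eA) :
    g = g' := by
  calc g = conv MA (cunit eA) g := (conv_one_left MA eA hcl hml g).symm
    _ = conv MA (conv MA g' f) g := by rw [h2]
    _ = conv MA g' (conv MA f g) := conv_assoc MA hco hma g' f g
    _ = conv MA g' (cunit eA) := by rw [h1]
    _ = g' := conv_one_right MA eA hcr hmr g'

end Conv


section Hopf

variable {R H : Type*} [CommRing R] [AddCommGroup H] [Module R H] [Coalgebra R H]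
variable (h : HopfMul R H)

universe w

lemma sum_reindex {V : Type*} [AddCommMonoid V] {ι : Type*} (s : Finset ι) (F : ι → V) :
    ∑ i ∈ (Finset.univ : Finset (ULift.{w} (Fin s.card))),
        F (s.equivFin.symm i.down) = ∑ i ∈ s, F i := by
  calc ∑ i ∈ (Finset.univ : Finset (ULift.{w} (Fin s.card))),
        F (s.equivFin.symm i.down)
      = ∑ j : Fin s.card, F (s.equivFin.symm j) :=
        Equiv.sum_comp (Equiv.ulift) (fun j => F (s.equivFin.symm j))
    _ = ∑ z : {x // x ∈ s}, F z := Equiv.sum_comp s.equivFin.symm (fun z => F z)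
    _ = ∑ i ∈ s, F i := Finset.sum_coe_sort s F

variable {C : Type*} [AddCommGroup C] [Module R C] [CoalgebraStruct R C]

/-- Reindex a representation so that its index type lives in a prescribed universe. -/
noncomputable def copyRepr {a : C} {ι : Type*} (r : Coalgebra.Repr R a ι) :
    Coalgebra.Repr R a (ULift.{w} (Fin r.index.card)) :=
  ⟨(Finset.univ : Finset (ULift.{w} (Fin r.index.card))),
   fun i => r.left (r.index.equivFin.symm i.down),
   fun i => r.right (r.index.equivFin.symm i.down), by
    rw [← r.eq]
    exact sum_reindex r.index (fun i => r.left i ⊗ₜ[R] r.right i)⟩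

lemma copyRepr_sum {V : Type*} [AddCommMonoid V] {a : C} {ι : Type*} (r : Coalgebra.Repr R a ι)
    (F : C → C → V) :
    ∑ i ∈ (copyRepr.{w} r).index, F ((copyRepr.{w} r).left i) ((copyRepr.{w} r).right i)
      = ∑ i ∈ r.index, F (r.left i) (r.right i) :=
  sum_reindex r.index (fun i => F (r.left i) (r.right i))

/-- Multiplication as a map on the tensor square. -/
noncomputable def M : H ⊗[R] H →ₗ[R] H := TensorProduct.lift h.mul

@[simp] lemma M_tmul (x y : H) : M h (x ⊗ₜ[R] y) = h.mul x y := rfl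

lemma S_mul_left' {a : H} {ι : Type*} (r : Coalgebra.Repr R a ι) :
    ∑ i ∈ r.index, h.mul (h.S (r.left i)) (r.right i) = counit (R := R) a • h.one := by
  rw [← copyRepr_sum r (fun x y => h.mul (h.S x) y)]
  exact h.S_mul_left a (copyRepr r)

lemma S_mul_right' {a : H} {ι : Type*} (r : Coalgebra.Repr R a ι) :
    ∑ i ∈ r.index, h.mul (r.left i) (h.S (r.right i)) = counit (R := R) a • h.one := by
  rw [← copyRepr_sum r (fun x y => h.mul x (h.S y))]
  exact h.S_mul_right a (copyRepr r)

lemma comul_mul' (a b : H) {ια ιβ : Type*} (ra : Coalgebra.Repr R a ια) (rb : Coalgebra.Repr R b ιβ) :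
    comul (R := R) (h.mul a b) = ∑ i ∈ ra.index, ∑ j ∈ rb.index,
      h.mul (ra.left i) (rb.left j) ⊗ₜ[R] h.mul (ra.right i) (rb.right j) := by
  rw [h.comul_mul a b (copyRepr ra) (copyRepr rb)]
  rw [copyRepr_sum ra (fun x y => ∑ j ∈ (copyRepr rb).index,
    h.mul x ((copyRepr rb).left j) ⊗ₜ[R] h.mul y ((copyRepr rb).right j))]
  exact Finset.sum_congr rfl fun i _ =>
    copyRepr_sum rb (fun x y => h.mul (ra.left i) x ⊗ₜ[R] h.mul (ra.right i) y)

/-- The representation `Δ1 = 1 ⊗ 1`. -/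
noncomputable def oneRepr : Coalgebra.Repr R h.one ℕ :=
  ⟨({0} : Finset ℕ), fun _ => h.one, fun _ => h.one, by simpa using h.comul_one.symm⟩

/-- A representation of `Δ(ab)` from representations of `Δa`, `Δb`. -/
noncomputable def prodRepr {a b : H} {ια ιβ : Type*} (ra : Coalgebra.Repr R a ια) (rb : Coalgebra.Repr R b ιβ) :
    Coalgebra.Repr R (h.mul a b) (ια × ιβ) :=
  ⟨ra.index ×ˢ rb.index, fun p => h.mul (ra.left p.1) (rb.left p.2),
   fun p => h.mul (ra.right p.1) (rb.right p.2), by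
    rw [comul_mul' h a b ra rb, ← Finset.sum_product']⟩

/-- The swap of a representation, valid by cocommutativity. -/
noncomputable def swapRepr (hc : Cocomm R H) {a : H} {ι : Type*} (r : Coalgebra.Repr R a ι) :
    Coalgebra.Repr R a ι :=
  ⟨r.index, r.right, r.left, by
    rw [← hc a, ← r.eq, map_sum]; simp⟩

/-- A representation of `Δ(x ⊗ y)` in the tensor-square coalgebra. -/
noncomputable def tmulRepr {x y : H} {ια ιβ : Type*} (rx : Coalgebra.Repr R x ια) (ry : Coalgebra.Repr R y ιβ) :
    Coalgebra.Repr R (x ⊗ₜ[R] y : H ⊗[R] H) (ια × ιβ) :=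
  ⟨rx.index ×ˢ ry.index,
   fun p => rx.left p.1 ⊗ₜ[R] ry.left p.2,
   fun p => rx.right p.1 ⊗ₜ[R] ry.right p.2, by
    have hrhs : CoalgebraStruct.comul (x ⊗ₜ[R] y)
        = TensorProduct.tensorTensorTensorComm R H H H H
            ((comul (R := R) x) ⊗ₜ[R] (comul (R := R) y)) := rfl
    rw [hrhs, ← rx.eq, ← ry.eq, TensorProduct.sum_tmul, map_sum, Finset.sum_product]
    refine Finset.sum_congr rfl fun i _ => ?_
    rw [TensorProduct.tmul_sum, map_sum]
    exact Finset.sum_congr rfl fun j _ => by simp⟩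

lemma comul2_tmul {x y : H} {ια ιβ : Type*} (rx : Coalgebra.Repr R x ια) (ry : Coalgebra.Repr R y ιβ) :
    comul (R := R) (x ⊗ₜ[R] y : H ⊗[R] H)
      = ∑ i ∈ rx.index, ∑ j ∈ ry.index,
          (rx.left i ⊗ₜ[R] ry.left j) ⊗ₜ[R] (rx.right i ⊗ₜ[R] ry.right j) := by
  rw [← (tmulRepr rx ry).eq]
  exact Finset.sum_product _ _ _

lemma counit2_tmul (x y : H) :
    counit (R := R) (x ⊗ₜ[R] y : H ⊗[R] H) = counit (R := R) x * counit (R := R) y := by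
  rw [TensorProduct.counit_tmul, smul_eq_mul, mul_comm]

lemma counit_S (a : H) : counit (R := R) (h.S a) = counit (R := R) a := by
  set r := Coalgebra.Repr.arbitrary R a
  have h1 := congrArg (counit (R := R)) (S_mul_left' h r)
  rw [map_sum] at h1
  simp only [h.counit_mul, map_smul, h.counit_one, smul_eq_mul, mul_one] at h1
  calc counit (R := R) (h.S a)
      = counit (R := R) (h.S (∑ i ∈ r.index, counit (R := R) (r.right i) • r.left i)) := by
        rw [sum_smul_counit r]
    _ = ∑ i ∈ r.index, counit (R := R) (h.S (r.left i)) * counit (R := R) (r.right i) := by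
        rw [map_sum, map_sum]
        refine Finset.sum_congr rfl fun i _ => ?_
        simp [mul_comm]
    _ = counit (R := R) a := h1

lemma S_one : h.S h.one = h.one := by
  have h1 := S_mul_left' h (oneRepr h)
  simpa [oneRepr, h.mul_one, h.counit_one] using h1


/-! #### Coalgebra laws for the tensor square -/

lemma hcl2 : (counit (R := R) (A := H ⊗[R] H)).rTensor (H ⊗[R] H) ∘ₗ comul
    = TensorProduct.mk R R (H ⊗[R] H) 1 := by
  apply TensorProduct.ext'
  intro x y
  set rx := Coalgebra.Repr.arbitrary R x
  set ry := Coalgebra.Repr.arbitrary R y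
  simp only [LinearMap.comp_apply]
  rw [comul2_tmul rx ry]
  simp only [map_sum, LinearMap.rTensor_tmul, counit2_tmul, TensorProduct.mk_apply]
  refine (TensorProduct.lid R (H ⊗[R] H)).injective ?_
  simp only [map_sum, TensorProduct.lid_tmul, one_smul]
  calc ∑ i ∈ rx.index, ∑ j ∈ ry.index,
        (counit (R := R) (rx.left i) * counit (R := R) (ry.left j)) •
          (rx.right i ⊗ₜ[R] ry.right j)
      = ∑ i ∈ rx.index, (counit (R := R) (rx.left i) • rx.right i) ⊗ₜ[R]
          (∑ j ∈ ry.index, counit (R := R) (ry.left j) • ry.right j) := by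
        refine Finset.sum_congr rfl fun i _ => ?_
        rw [TensorProduct.tmul_sum]
        refine Finset.sum_congr rfl fun j _ => ?_
        rw [mul_smul, ← TensorProduct.tmul_smul, TensorProduct.smul_tmul']
    _ = (∑ i ∈ rx.index, counit (R := R) (rx.left i) • rx.right i) ⊗ₜ[R] y := by
        rw [sum_counit_smul ry, TensorProduct.sum_tmul]
    _ = x ⊗ₜ[R] y := by rw [sum_counit_smul rx]

lemma hcr2 : (counit (R := R) (A := H ⊗[R] H)).lTensor (H ⊗[R] H) ∘ₗ comul
    = (TensorProduct.mk R (H ⊗[R] H) R).flip 1 := by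
  apply TensorProduct.ext'
  intro x y
  set rx := Coalgebra.Repr.arbitrary R x
  set ry := Coalgebra.Repr.arbitrary R y
  simp only [LinearMap.comp_apply]
  rw [comul2_tmul rx ry]
  simp only [map_sum, LinearMap.lTensor_tmul, counit2_tmul, LinearMap.flip_apply,
    TensorProduct.mk_apply]
  refine (TensorProduct.rid R (H ⊗[R] H)).injective ?_
  simp only [map_sum, TensorProduct.rid_tmul, one_smul]
  calc ∑ i ∈ rx.index, ∑ j ∈ ry.index,
        (counit (R := R) (rx.right i) * counit (R := R) (ry.right j)) •
          (rx.left i ⊗ₜ[R] ry.left j)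
      = ∑ i ∈ rx.index, (counit (R := R) (rx.right i) • rx.left i) ⊗ₜ[R]
          (∑ j ∈ ry.index, counit (R := R) (ry.right j) • ry.left j) := by
        refine Finset.sum_congr rfl fun i _ => ?_
        rw [TensorProduct.tmul_sum]
        refine Finset.sum_congr rfl fun j _ => ?_
        rw [mul_smul, ← TensorProduct.tmul_smul, TensorProduct.smul_tmul']
    _ = (∑ i ∈ rx.index, counit (R := R) (rx.right i) • rx.left i) ⊗ₜ[R] y := by
        rw [sum_smul_counit ry, TensorProduct.sum_tmul]
    _ = x ⊗ₜ[R] y := by rw [sum_smul_counit rx]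

lemma sum_swap4 {α γ : Type*} {β : α → Type*} {δ : γ → Type*} {V : Type*}
    [AddCommMonoid V] {s : Finset α} {t : Finset γ} {S : ∀ a : α, Finset (β a)}
    {T : ∀ c : γ, Finset (δ c)} (F : ∀ a : α, β a → ∀ c : γ, δ c → V) :
    ∑ i ∈ s, ∑ j ∈ t, ∑ m ∈ S i, ∑ n ∈ T j, F i m j n
      = ∑ j ∈ t, ∑ n ∈ T j, ∑ i ∈ s, ∑ m ∈ S i, F i m j n := by
  rw [Finset.sum_comm]
  refine Finset.sum_congr rfl fun j _ => ?_
  refine Eq.trans (Finset.sum_congr rfl fun i _ => Finset.sum_comm) ?_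
  exact Finset.sum_comm

lemma hco2 : ↑(TensorProduct.assoc R (H ⊗[R] H) (H ⊗[R] H) (H ⊗[R] H)) ∘ₗ
      (comul (R := R) (A := H ⊗[R] H)).rTensor (H ⊗[R] H) ∘ₗ comul
    = (comul (R := R) (A := H ⊗[R] H)).lTensor (H ⊗[R] H) ∘ₗ comul := by
  apply TensorProduct.ext'
  intro x y
  set rx := Coalgebra.Repr.arbitrary R x
  set ry := Coalgebra.Repr.arbitrary R y
  set rxL : ∀ i : H × H, Coalgebra.Repr R (rx.left i) (H × H) :=
    fun i => Coalgebra.Repr.arbitrary R (rx.left i)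
  set rxR : ∀ i : H × H, Coalgebra.Repr R (rx.right i) (H × H) :=
    fun i => Coalgebra.Repr.arbitrary R (rx.right i)
  set ryL : ∀ j : H × H, Coalgebra.Repr R (ry.left j) (H × H) :=
    fun j => Coalgebra.Repr.arbitrary R (ry.left j)
  set ryR : ∀ j : H × H, Coalgebra.Repr R (ry.right j) (H × H) :=
    fun j => Coalgebra.Repr.arbitrary R (ry.right j)
  set Φ : (H ⊗[R] (H ⊗[R] H)) ⊗[R] (H ⊗[R] (H ⊗[R] H)) →ₗ[R]
      (H ⊗[R] H) ⊗[R] ((H ⊗[R] H) ⊗[R] (H ⊗[R] H)) :=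
    (↑(TensorProduct.tensorTensorTensorComm R H H H H) :
        (H ⊗[R] H) ⊗[R] (H ⊗[R] H) →ₗ[R] (H ⊗[R] H) ⊗[R] (H ⊗[R] H)).lTensor (H ⊗[R] H)
      ∘ₗ ↑(TensorProduct.tensorTensorTensorComm R H (H ⊗[R] H) H (H ⊗[R] H)) with hΦ
  have hΦval : ∀ (p q s p' q' s' : H),
      Φ ((p ⊗ₜ[R] (q ⊗ₜ[R] s)) ⊗ₜ[R] (p' ⊗ₜ[R] (q' ⊗ₜ[R] s')))
        = (p ⊗ₜ[R] p') ⊗ₜ[R] ((q ⊗ₜ[R] q') ⊗ₜ[R] (s ⊗ₜ[R] s')) := by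
    intro p q s p' q' s'
    simp [hΦ, TensorProduct.tensorTensorTensorComm_tmul]
  simp only [LinearMap.comp_apply]
  rw [comul2_tmul rx ry]
  simp only [map_sum, LinearMap.rTensor_tmul, LinearMap.lTensor_tmul]
  calc ∑ i ∈ rx.index, ∑ j ∈ ry.index,
        (TensorProduct.assoc R (H ⊗[R] H) (H ⊗[R] H) (H ⊗[R] H))
          ((comul (R := R) (rx.left i ⊗ₜ[R] ry.left j)) ⊗ₜ[R]
            (rx.right i ⊗ₜ[R] ry.right j))
      = ∑ i ∈ rx.index, ∑ j ∈ ry.index, ∑ m ∈ (rxL i).index, ∑ n ∈ (ryL j).index,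
          ((rxL i).left m ⊗ₜ[R] (ryL j).left n) ⊗ₜ[R]
            (((rxL i).right m ⊗ₜ[R] (ryL j).right n) ⊗ₜ[R]
              (rx.right i ⊗ₜ[R] ry.right j)) := by
        refine Finset.sum_congr rfl fun i _ => Finset.sum_congr rfl fun j _ => ?_
        rw [comul2_tmul (rxL i) (ryL j)]
        rw [TensorProduct.sum_tmul, map_sum]
        refine Finset.sum_congr rfl fun m _ => ?_
        rw [TensorProduct.sum_tmul, map_sum]
        refine Finset.sum_congr rfl fun n _ => ?_
        exact TensorProduct.assoc_tmul _ _ _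
    _ = ∑ j ∈ ry.index, ∑ n ∈ (ryL j).index, ∑ i ∈ rx.index, ∑ m ∈ (rxL i).index,
          ((rxL i).left m ⊗ₜ[R] (ryL j).left n) ⊗ₜ[R]
            (((rxL i).right m ⊗ₜ[R] (ryL j).right n) ⊗ₜ[R]
              (rx.right i ⊗ₜ[R] ry.right j)) :=
        sum_swap4 _
    _ = Φ ((∑ i ∈ rx.index, ∑ m ∈ (rxL i).index,
            (rxL i).left m ⊗ₜ[R] ((rxL i).right m ⊗ₜ[R] rx.right i)) ⊗ₜ[R]
          (∑ j ∈ ry.index, ∑ n ∈ (ryL j).index,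
            (ryL j).left n ⊗ₜ[R] ((ryL j).right n ⊗ₜ[R] ry.right j))) := by
        simp only [TensorProduct.sum_tmul, TensorProduct.tmul_sum, map_sum, hΦval]
    _ = Φ ((∑ i ∈ rx.index, ∑ m ∈ (rxR i).index,
            rx.left i ⊗ₜ[R] ((rxR i).left m ⊗ₜ[R] (rxR i).right m)) ⊗ₜ[R]
          (∑ j ∈ ry.index, ∑ n ∈ (ryR j).index,
            ry.left j ⊗ₜ[R] ((ryR j).left n ⊗ₜ[R] (ryR j).right n))) := by
        rw [Coalgebra.sum_tmul_tmul_eq rx rxL rxR, Coalgebra.sum_tmul_tmul_eq ry ryL ryR]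
    _ = ∑ j ∈ ry.index, ∑ n ∈ (ryR j).index, ∑ i ∈ rx.index, ∑ m ∈ (rxR i).index,
          (rx.left i ⊗ₜ[R] ry.left j) ⊗ₜ[R]
            (((rxR i).left m ⊗ₜ[R] (ryR j).left n) ⊗ₜ[R]
              ((rxR i).right m ⊗ₜ[R] (ryR j).right n)) := by
        simp only [TensorProduct.sum_tmul, TensorProduct.tmul_sum, map_sum, hΦval]
    _ = ∑ i ∈ rx.index, ∑ j ∈ ry.index, ∑ m ∈ (rxR i).index, ∑ n ∈ (ryR j).index,
          (rx.left i ⊗ₜ[R] ry.left j) ⊗ₜ[R]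
            (((rxR i).left m ⊗ₜ[R] (ryR j).left n) ⊗ₜ[R]
              ((rxR i).right m ⊗ₜ[R] (ryR j).right n)) :=
        (sum_swap4 _).symm
    _ = ∑ i ∈ rx.index, ∑ j ∈ ry.index,
          (rx.left i ⊗ₜ[R] ry.left j) ⊗ₜ[R]
            comul (R := R) (rx.right i ⊗ₜ[R] ry.right j) := by
        refine Finset.sum_congr rfl fun i _ => Finset.sum_congr rfl fun j _ => ?_
        rw [comul2_tmul (rxR i) (ryR j), TensorProduct.tmul_sum]
        refine Finset.sum_congr rfl fun m _ => ?_
        rw [TensorProduct.tmul_sum]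

/-! #### Multiplication on the tensor square and antipode lemmas -/

/-- Componentwise multiplication on `H ⊗ H`. -/
noncomputable def M2 : (H ⊗[R] H) ⊗[R] (H ⊗[R] H) →ₗ[R] H ⊗[R] H :=
  TensorProduct.map (M h) (M h) ∘ₗ ↑(TensorProduct.tensorTensorTensorComm R H H H H)

@[simp] lemma M2_tmul (a b c d : H) :
    M2 h ((a ⊗ₜ[R] b) ⊗ₜ[R] (c ⊗ₜ[R] d)) = h.mul a c ⊗ₜ[R] h.mul b d := by
  simp [M2, TensorProduct.tensorTensorTensorComm_tmul]

lemma conv_apply2 {A : Type*} [AddCommGroup A] [Module R A] (MA : A ⊗[R] A →ₗ[R] A)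
    (f g : H ⊗[R] H →ₗ[R] A) (a b : H) {ια ιβ : Type*} (ra : Coalgebra.Repr R a ια) (rb : Coalgebra.Repr R b ιβ) :
    conv MA f g (a ⊗ₜ[R] b)
      = ∑ i ∈ ra.index, ∑ j ∈ rb.index,
          MA (f (ra.left i ⊗ₜ[R] rb.left j) ⊗ₜ[R] g (ra.right i ⊗ₜ[R] rb.right j)) := by
  rw [conv_apply MA f g (tmulRepr ra rb)]
  exact Finset.sum_product _ _ _

lemma mul_sum_mul {ι : Type*} (x s : H) (T : Finset ι) (t : ι → H) :
    h.mul x (h.mul (∑ j ∈ T, t j) s) = ∑ j ∈ T, h.mul x (h.mul (t j) s) := by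
  rw [map_sum, LinearMap.sum_apply, map_sum]

/-- The antipode is an antihomomorphism. -/
lemma S_mul (a b : H) : h.S (h.mul a b) = h.mul (h.S b) (h.S a) := by
  have hmap : (M h ∘ₗ TensorProduct.map h.S h.S ∘ₗ ↑(TensorProduct.comm R H H) :
      H ⊗[R] H →ₗ[R] H) = h.S ∘ₗ M h := by
    refine conv_unique (C := H ⊗[R] H) (M h) h.one hco2 hcl2 hcr2
      (fun x y z => by simp [h.mul_assoc])
      (fun x => by simpa using h.one_mul x)
      (fun x => by simpa using h.mul_one x)
      (M h) _ _ ?_ ?_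
    · -- conv M (M ∘ (S ⊗ S) ∘ comm) = cunit
      apply TensorProduct.ext'
      intro a b
      set ra := Coalgebra.Repr.arbitrary R a
      set rb := Coalgebra.Repr.arbitrary R b
      rw [conv_apply2 (M h) (M h)
        (M h ∘ₗ TensorProduct.map h.S h.S ∘ₗ ↑(TensorProduct.comm R H H)) a b ra rb]
      have : ∀ i ∈ ra.index, ∀ j ∈ rb.index,
          M h ((M h (ra.left i ⊗ₜ[R] rb.left j)) ⊗ₜ[R]
            ((M h ∘ₗ TensorProduct.map h.S h.S ∘ₗ ↑(TensorProduct.comm R H H))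
              (ra.right i ⊗ₜ[R] rb.right j)))
          = h.mul (ra.left i) (h.mul (h.mul (rb.left j) (h.S (rb.right j)))
              (h.S (ra.right i))) := by
        intro i _ j _
        simp only [LinearMap.comp_apply, LinearEquiv.coe_coe, TensorProduct.comm_tmul,
          TensorProduct.map_tmul, M_tmul]
        rw [h.mul_assoc, ← h.mul_assoc (rb.left j)]
      calc ∑ i ∈ ra.index, ∑ j ∈ rb.index,
            M h ((M h (ra.left i ⊗ₜ[R] rb.left j)) ⊗ₜ[R]
              ((M h ∘ₗ TensorProduct.map h.S h.S ∘ₗ ↑(TensorProduct.comm R H H))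
                (ra.right i ⊗ₜ[R] rb.right j)))
          = ∑ i ∈ ra.index, ∑ j ∈ rb.index,
              h.mul (ra.left i) (h.mul (h.mul (rb.left j) (h.S (rb.right j)))
                (h.S (ra.right i))) := by
            exact Finset.sum_congr rfl fun i hi => Finset.sum_congr rfl fun j hj =>
              this i hi j hj
        _ = ∑ i ∈ ra.index, counit (R := R) b •
              h.mul (ra.left i) (h.S (ra.right i)) := by
            refine Finset.sum_congr rfl fun i _ => ?_
            rw [← mul_sum_mul h, S_mul_right' h rb]
            simp [h.one_mul]
        _ = (counit (R := R) a * counit (R := R) b) • h.one := by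
            rw [← Finset.smul_sum, S_mul_right' h ra, smul_smul, mul_comm]
        _ = (cunit h.one : H ⊗[R] H →ₗ[R] H) (a ⊗ₜ[R] b) := by
            rw [cunit_apply, counit2_tmul]
    · -- conv (S ∘ M) M = cunit
      apply TensorProduct.ext'
      intro a b
      set ra := Coalgebra.Repr.arbitrary R a
      set rb := Coalgebra.Repr.arbitrary R b
      rw [conv_apply2 (M h) (h.S ∘ₗ M h) (M h) a b ra rb]
      have h1 : ∑ i ∈ ra.index, ∑ j ∈ rb.index,
          h.mul (h.S (h.mul (ra.left i) (rb.left j))) (h.mul (ra.right i) (rb.right j))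
          = counit (R := R) (h.mul a b) • h.one := by
        rw [← Finset.sum_product']
        exact S_mul_left' h (prodRepr h ra rb)
      calc ∑ i ∈ ra.index, ∑ j ∈ rb.index,
            M h (((h.S ∘ₗ M h) (ra.left i ⊗ₜ[R] rb.left j)) ⊗ₜ[R]
              M h (ra.right i ⊗ₜ[R] rb.right j))
          = ∑ i ∈ ra.index, ∑ j ∈ rb.index,
              h.mul (h.S (h.mul (ra.left i) (rb.left j)))
                (h.mul (ra.right i) (rb.right j)) := by
            exact Finset.sum_congr rfl fun i _ => Finset.sum_congr rfl fun j _ => by simp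
        _ = counit (R := R) (h.mul a b) • h.one := h1
        _ = (cunit h.one : H ⊗[R] H →ₗ[R] H) (a ⊗ₜ[R] b) := by
            rw [cunit_apply, counit2_tmul, h.counit_mul]
  have := LinearMap.congr_fun hmap (a ⊗ₜ[R] b)
  simpa using this.symm

/-- The antipode is an involution (for cocommutative `H`). -/
lemma S_S (hc : Cocomm R H) (a : H) : h.S (h.S a) = a := by
  have hmap : (LinearMap.id : H →ₗ[R] H) = h.S ∘ₗ h.S := by
    refine conv_unique (C := H) (M h) h.one Coalgebra.coassoc
      Coalgebra.rTensor_counit_comp_comul Coalgebra.lTensor_counit_comp_comul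
      (fun x y z => by simp [h.mul_assoc])
      (fun x => by simpa using h.one_mul x)
      (fun x => by simpa using h.mul_one x)
      h.S _ _ ?_ ?_
    · -- conv S id = cunit
      ext c
      set r := Coalgebra.Repr.arbitrary R c
      rw [conv_apply (M h) h.S LinearMap.id r]
      calc ∑ i ∈ r.index, M h (h.S (r.left i) ⊗ₜ[R] LinearMap.id (r.right i))
          = ∑ i ∈ r.index, h.mul (h.S (r.left i)) (r.right i) := by simp
        _ = counit (R := R) c • h.one := S_mul_left' h r
        _ = (cunit h.one : H →ₗ[R] H) c := rfl
    · -- conv (S ∘ S) S = cunit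
      ext c
      set r := Coalgebra.Repr.arbitrary R c
      rw [conv_apply (M h) (h.S ∘ₗ h.S) h.S r]
      calc ∑ i ∈ r.index, M h ((h.S ∘ₗ h.S) (r.left i) ⊗ₜ[R] h.S (r.right i))
          = ∑ i ∈ r.index, h.S (h.mul (r.right i) (h.S (r.left i))) := by
            refine Finset.sum_congr rfl fun i _ => ?_
            simp only [LinearMap.comp_apply, M_tmul]
            rw [S_mul h (r.right i) (h.S (r.left i))]
        _ = h.S (∑ i ∈ r.index, h.mul (r.right i) (h.S (r.left i))) := by
            rw [map_sum]
        _ = h.S (counit (R := R) c • h.one) := by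
            rw [show (∑ i ∈ r.index, h.mul (r.right i) (h.S (r.left i)))
              = counit (R := R) c • h.one from S_mul_right' h (swapRepr hc r)]
        _ = (cunit h.one : H →ₗ[R] H) c := by
            rw [map_smul, S_one h, cunit_apply]
  have := LinearMap.congr_fun hmap a
  simpa using this.symm


/-! #### The swap lemma and `Δ ∘ S = (S ⊗ S) ∘ Δ` -/

lemma assoc_rT_rT :
    (↑(TensorProduct.assoc R (H ⊗[R] H) H H) :
        ((H ⊗[R] H) ⊗[R] H) ⊗[R] H →ₗ[R] (H ⊗[R] H) ⊗[R] (H ⊗[R] H)) ∘ₗ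
      ((comul (R := R) (A := H)).rTensor H).rTensor H
    = (comul (R := R) (A := H)).rTensor (H ⊗[R] H) ∘ₗ ↑(TensorProduct.assoc R H H H) := by
  apply TensorProduct.ext_threefold
  intro x y z
  simp

/-- `Δ ⊗ Δ` applied to `Δ a`, with the second comultiplication on the first leg. -/
lemma mapDD_comul (a : H) {ι : Type*} (r : Coalgebra.Repr R a ι)
    {κ : ι → Type*} (rL : ∀ i : ι, Coalgebra.Repr R (r.left i) (κ i)) :
    TensorProduct.map (comul (R := R)) (comul (R := R)) (comul (R := R) a)
      = ∑ i ∈ r.index, ∑ j ∈ (rL i).index,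
          comul (R := R) ((rL i).left j) ⊗ₜ[R] ((rL i).right j ⊗ₜ[R] r.right i) := by
  have e0 := LinearMap.congr_fun
    (LinearMap.rTensor_comp_lTensor (f := comul (R := R) (A := H))
      (g := comul (R := R) (A := H)))
    (comul (R := R) a)
  simp only [LinearMap.comp_apply] at e0
  rw [← e0, ← Coalgebra.coassoc_apply a, ← r.eq]
  simp only [map_sum, LinearMap.rTensor_tmul]
  refine Finset.sum_congr rfl fun i _ => ?_
  rw [← (rL i).eq, TensorProduct.sum_tmul]
  simp only [map_sum, TensorProduct.assoc_tmul, LinearMap.rTensor_tmul]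

/-- Auxiliary: `Δ` on the first leg with an attached element equals `Δ` on the middle,
by coassociativity. -/
lemma lam_eq (c : H) :
    (comul (R := R) (A := H)).rTensor (H ⊗[R] H) ∘ₗ
        ((TensorProduct.mk R H H).flip c).lTensor H ∘ₗ comul
      = ((TensorProduct.mk R H H).flip c).lTensor (H ⊗[R] H) ∘ₗ
          ↑(TensorProduct.assoc R H H H).symm ∘ₗ
          (comul (R := R) (A := H)).lTensor H ∘ₗ comul := by
  rw [← LinearMap.comp_assoc _ _ ((comul (R := R) (A := H)).rTensor (H ⊗[R] H))]
  rw [LinearMap.rTensor_comp_lTensor, ← LinearMap.lTensor_comp_rTensor]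
  rw [LinearMap.comp_assoc, Coalgebra.coassoc_symm]

/-- `Δ ⊗ Δ` applied to `Δ a`, in middle-sibling form. -/
lemma mapDD_mid (a : H) {ι : Type*} (r : Coalgebra.Repr R a ι)
    {κ : ι → Type*} (rL : ∀ i : ι, Coalgebra.Repr R (r.left i) (κ i))
    {μ : ∀ i : ι, κ i → Type*}
    (rLR : ∀ (i : ι) (j : κ i), Coalgebra.Repr R ((rL i).right j) (μ i j)) :
    TensorProduct.map (comul (R := R)) (comul (R := R)) (comul (R := R) a)
      = ∑ i ∈ r.index, ∑ j ∈ (rL i).index, ∑ k ∈ (rLR i j).index,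
          ((rL i).left j ⊗ₜ[R] (rLR i j).left k) ⊗ₜ[R]
            ((rLR i j).right k ⊗ₜ[R] r.right i) := by
  rw [mapDD_comul a r rL]
  refine Finset.sum_congr rfl fun i _ => ?_
  have e1 := LinearMap.congr_fun (lam_eq (R := R) (r.right i)) (r.left i)
  simp only [LinearMap.comp_apply] at e1
  calc ∑ j ∈ (rL i).index,
        comul (R := R) ((rL i).left j) ⊗ₜ[R] ((rL i).right j ⊗ₜ[R] r.right i)
      = (comul (R := R) (A := H)).rTensor (H ⊗[R] H)
          ((((TensorProduct.mk R H H).flip (r.right i)).lTensor H)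
            (comul (R := R) (r.left i))) := by
        rw [← (rL i).eq]
        simp only [map_sum, LinearMap.lTensor_tmul, LinearMap.rTensor_tmul,
          LinearMap.flip_apply, TensorProduct.mk_apply]
    _ = (((TensorProduct.mk R H H).flip (r.right i)).lTensor (H ⊗[R] H))
          ((TensorProduct.assoc R H H H).symm
            (((comul (R := R) (A := H)).lTensor H) (comul (R := R) (r.left i)))) := e1
    _ = ∑ j ∈ (rL i).index, ∑ k ∈ (rLR i j).index,
          ((rL i).left j ⊗ₜ[R] (rLR i j).left k) ⊗ₜ[R]
            ((rLR i j).right k ⊗ₜ[R] r.right i) := by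
        rw [← (rL i).eq]
        simp only [map_sum, LinearMap.lTensor_tmul]
        refine Finset.sum_congr rfl fun j _ => ?_
        rw [← (rLR i j).eq, TensorProduct.tmul_sum]
        simp only [map_sum, TensorProduct.assoc_symm_tmul, LinearMap.lTensor_tmul,
          LinearMap.flip_apply, TensorProduct.mk_apply]

/-- Cocommutativity allows swapping the middle two legs of `(Δ ⊗ Δ) ∘ Δ`. -/
lemma comul_swap (hc : Cocomm R H) (a : H) :
    (TensorProduct.tensorTensorTensorComm R H H H H)
        (TensorProduct.map (comul (R := R)) (comul (R := R)) (comul (R := R) a))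
      = TensorProduct.map (comul (R := R)) (comul (R := R)) (comul (R := R) a) := by
  set r := Coalgebra.Repr.arbitrary R a
  set rL : ∀ i : H × H, Coalgebra.Repr R (r.left i) (H × H) :=
    fun i => Coalgebra.Repr.arbitrary R (r.left i)
  set rLR : ∀ (i : H × H) (j : H × H), Coalgebra.Repr R ((rL i).right j) (H × H) :=
    fun i j => Coalgebra.Repr.arbitrary R ((rL i).right j)
  rw [mapDD_mid a r rL rLR]
  simp only [map_sum]
  refine Finset.sum_congr rfl fun i _ => Finset.sum_congr rfl fun j _ => ?_
  set Ξ : H ⊗[R] H →ₗ[R] (H ⊗[R] H) ⊗[R] (H ⊗[R] H) :=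
    TensorProduct.map (TensorProduct.mk R H H ((rL i).left j))
      ((TensorProduct.mk R H H).flip (r.right i)) with hΞ
  calc ∑ k ∈ (rLR i j).index,
        (TensorProduct.tensorTensorTensorComm R H H H H)
          (((rL i).left j ⊗ₜ[R] (rLR i j).left k) ⊗ₜ[R]
            ((rLR i j).right k ⊗ₜ[R] r.right i))
      = Ξ (∑ k ∈ (rLR i j).index, (rLR i j).right k ⊗ₜ[R] (rLR i j).left k) := by
        rw [map_sum]
        refine Finset.sum_congr rfl fun k _ => ?_
        simp [hΞ, TensorProduct.tensorTensorTensorComm_tmul]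
    _ = Ξ (comul (R := R) ((rL i).right j)) := by
        rw [show (∑ k ∈ (rLR i j).index, (rLR i j).right k ⊗ₜ[R] (rLR i j).left k)
          = comul (R := R) ((rL i).right j) from (swapRepr hc (rLR i j)).eq]
    _ = ∑ k ∈ (rLR i j).index,
          ((rL i).left j ⊗ₜ[R] (rLR i j).left k) ⊗ₜ[R]
            ((rLR i j).right k ⊗ₜ[R] r.right i) := by
        rw [← (rLR i j).eq, map_sum]
        refine Finset.sum_congr rfl fun k _ => ?_
        simp [hΞ]


lemma M2_assoc (x y z : H ⊗[R] H) :
    M2 h (M2 h (x ⊗ₜ[R] y) ⊗ₜ[R] z) = M2 h (x ⊗ₜ[R] M2 h (y ⊗ₜ[R] z)) := by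
  induction x using TensorProduct.induction_on with
  | zero => simp
  | add u v hu hv => simp only [TensorProduct.add_tmul, map_add, hu, hv]
  | tmul x1 x2 =>
    induction y using TensorProduct.induction_on with
    | zero => simp
    | add u v hu hv =>
      simp only [TensorProduct.add_tmul, TensorProduct.tmul_add, map_add, hu, hv]
    | tmul y1 y2 =>
      induction z using TensorProduct.induction_on with
      | zero => simp
      | add u v hu hv =>
        simp only [TensorProduct.add_tmul, TensorProduct.tmul_add, map_add, hu, hv]
      | tmul z1 z2 => simp [h.mul_assoc]

lemma M2_one_left (x : H ⊗[R] H) : M2 h ((h.one ⊗ₜ[R] h.one) ⊗ₜ[R] x) = x := by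
  induction x using TensorProduct.induction_on with
  | zero => simp
  | add u v hu hv => simp only [TensorProduct.tmul_add, map_add, hu, hv]
  | tmul x1 x2 => simp [h.one_mul]

lemma M2_one_right (x : H ⊗[R] H) : M2 h (x ⊗ₜ[R] (h.one ⊗ₜ[R] h.one)) = x := by
  induction x using TensorProduct.induction_on with
  | zero => simp
  | add u v hu hv => simp only [TensorProduct.add_tmul, map_add, hu, hv]
  | tmul x1 x2 => simp [h.mul_one]

/-- Comultiplication is multiplicative. -/
lemma Dmul (x y : H) :
    comul (R := R) (h.mul x y)
      = M2 h (comul (R := R) x ⊗ₜ[R] comul (R := R) y) := by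
  set rx := Coalgebra.Repr.arbitrary R x
  set ry := Coalgebra.Repr.arbitrary R y
  rw [comul_mul' h x y rx ry, ← rx.eq, ← ry.eq, TensorProduct.sum_tmul, map_sum]
  refine Finset.sum_congr rfl fun i _ => ?_
  rw [TensorProduct.tmul_sum, map_sum]
  exact Finset.sum_congr rfl fun j _ => (M2_tmul h _ _ _ _).symm

/-- `Δ ∘ S = (S ⊗ S) ∘ Δ` on a cocommutative Hopf algebra. -/
lemma comul_S (hc : Cocomm R H) (k : H) :
    comul (R := R) (h.S k) = TensorProduct.map h.S h.S (comul (R := R) k) := by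
  have hmap : (comul (R := R) (A := H)) ∘ₗ h.S
      = TensorProduct.map h.S h.S ∘ₗ comul (R := R) (A := H) := by
    refine conv_unique (C := H) (M2 h) (h.one ⊗ₜ[R] h.one) Coalgebra.coassoc
      Coalgebra.rTensor_counit_comp_comul Coalgebra.lTensor_counit_comp_comul
      (fun x y z => M2_assoc h x y z) (fun x => M2_one_left h x) (fun x => M2_one_right h x)
      (comul (R := R) (A := H)) _ _ ?_ ?_
    · -- conv Δ (Δ ∘ S) = cunit
      ext a
      set r := Coalgebra.Repr.arbitrary R a
      rw [conv_apply (M2 h) _ _ r]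
      calc ∑ i ∈ r.index,
            M2 h (comul (R := R) (r.left i) ⊗ₜ[R]
              ((comul (R := R) (A := H)) ∘ₗ h.S) (r.right i))
          = ∑ i ∈ r.index, comul (R := R) (h.mul (r.left i) (h.S (r.right i))) := by
            exact Finset.sum_congr rfl fun i _ => (Dmul h _ _).symm
        _ = comul (R := R) (∑ i ∈ r.index, h.mul (r.left i) (h.S (r.right i))) := by
            rw [map_sum]
        _ = comul (R := R) (counit (R := R) a • h.one) := by rw [S_mul_right' h r]
        _ = (cunit (h.one ⊗ₜ[R] h.one) : H →ₗ[R] H ⊗[R] H) a := by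
            rw [map_smul, h.comul_one, cunit_apply]
    · -- conv ((S ⊗ S) ∘ Δ) Δ = cunit
      ext a
      set r := Coalgebra.Repr.arbitrary R a
      set rL : ∀ i : H × H, Coalgebra.Repr R (r.left i) (H × H) :=
        fun i => Coalgebra.Repr.arbitrary R (r.left i)
      set rR : ∀ i : H × H, Coalgebra.Repr R (r.right i) (H × H) :=
        fun i => Coalgebra.Repr.arbitrary R (r.right i)
      rw [conv_apply (M2 h) _ _ r]
      have hW : TensorProduct.map (comul (R := R)) (comul (R := R)) (comul (R := R) a)
          = ∑ i ∈ r.index, ∑ j ∈ (rL i).index, ∑ k ∈ (rR i).index,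
              ((rL i).left j ⊗ₜ[R] (rL i).right j) ⊗ₜ[R]
                ((rR i).left k ⊗ₜ[R] (rR i).right k) := by
        rw [← r.eq, map_sum]
        refine Finset.sum_congr rfl fun i _ => ?_
        rw [TensorProduct.map_tmul, ← (rL i).eq, ← (rR i).eq, TensorProduct.sum_tmul]
        exact Finset.sum_congr rfl fun j _ => TensorProduct.tmul_sum _ _ _
      have hSW : (TensorProduct.tensorTensorTensorComm R H H H H)
          (TensorProduct.map (comul (R := R)) (comul (R := R)) (comul (R := R) a))
          = ∑ i ∈ r.index, ∑ j ∈ (rL i).index, ∑ k ∈ (rR i).index,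
              ((rL i).left j ⊗ₜ[R] (rR i).left k) ⊗ₜ[R]
                ((rL i).right j ⊗ₜ[R] (rR i).right k) := by
        rw [hW]
        simp only [map_sum, TensorProduct.tensorTensorTensorComm_tmul]
      have eSwap : (∑ i ∈ r.index, ∑ j ∈ (rL i).index, ∑ k ∈ (rR i).index,
              ((rL i).left j ⊗ₜ[R] (rR i).left k) ⊗ₜ[R]
                ((rL i).right j ⊗ₜ[R] (rR i).right k))
          = ∑ i ∈ r.index, ∑ j ∈ (rL i).index, ∑ k ∈ (rR i).index,
              ((rL i).left j ⊗ₜ[R] (rL i).right j) ⊗ₜ[R]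
                ((rR i).left k ⊗ₜ[R] (rR i).right k) := by
        rw [← hSW, comul_swap hc a, hW]
      set G : H ⊗[R] H →ₗ[R] H := M h ∘ₗ (h.S).rTensor H with hG
      have hGval : ∀ u v : H, G (u ⊗ₜ[R] v) = h.mul (h.S u) v := by
        intro u v; simp [hG]
      have key := congrArg (TensorProduct.map G G) eSwap
      simp only [map_sum, TensorProduct.map_tmul, hGval] at key
      calc ∑ i ∈ r.index,
            M2 h ((TensorProduct.map h.S h.S ∘ₗ comul (R := R) (A := H)) (r.left i) ⊗ₜ[R]
              comul (R := R) (r.right i))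
          = ∑ i ∈ r.index, ∑ j ∈ (rL i).index, ∑ k ∈ (rR i).index,
              h.mul (h.S ((rL i).left j)) ((rR i).left k) ⊗ₜ[R]
                h.mul (h.S ((rL i).right j)) ((rR i).right k) := by
            refine Finset.sum_congr rfl fun i _ => ?_
            rw [LinearMap.comp_apply, ← (rL i).eq, ← (rR i).eq]
            simp only [map_sum, TensorProduct.map_tmul, TensorProduct.sum_tmul,
              TensorProduct.tmul_sum, M2_tmul]
            exact Finset.sum_comm
        _ = ∑ i ∈ r.index, ∑ j ∈ (rL i).index, ∑ k ∈ (rR i).index,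
              h.mul (h.S ((rL i).left j)) ((rL i).right j) ⊗ₜ[R]
                h.mul (h.S ((rR i).left k)) ((rR i).right k) := key
        _ = ∑ i ∈ r.index,
              (∑ j ∈ (rL i).index, h.mul (h.S ((rL i).left j)) ((rL i).right j)) ⊗ₜ[R]
                (∑ k ∈ (rR i).index, h.mul (h.S ((rR i).left k)) ((rR i).right k)) := by
            refine Finset.sum_congr rfl fun i _ => ?_
            rw [TensorProduct.sum_tmul]
            exact Finset.sum_congr rfl fun j _ => (TensorProduct.tmul_sum _ _ _).symm
        _ = ∑ i ∈ r.index,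
              (counit (R := R) (r.left i) • h.one) ⊗ₜ[R]
                (counit (R := R) (r.right i) • h.one) := by
            refine Finset.sum_congr rfl fun i _ => ?_
            rw [S_mul_left' h (rL i), S_mul_left' h (rR i)]
        _ = ∑ i ∈ r.index,
              (counit (R := R) (r.left i) * counit (R := R) (r.right i)) •
                (h.one ⊗ₜ[R] h.one) := by
            refine Finset.sum_congr rfl fun i _ => ?_
            rw [mul_smul, ← TensorProduct.tmul_smul, TensorProduct.smul_tmul']
        _ = (cunit (h.one ⊗ₜ[R] h.one) : H →ₗ[R] H ⊗[R] H) a := by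
            rw [← Finset.sum_smul, sum_counit_mul r, cunit_apply]
  have := LinearMap.congr_fun hmap k
  simpa using this

end Hopf


/-! #### The factorization setting -/

section Main

variable {R H : Type*} [CommRing R] [AddCommGroup H] [Module R H] [Coalgebra R H]
variable (h : HopfMul R H)

/-- Induction over the factorization `H = GK`. -/
lemma gen_induction (G K : Submodule R H)
    (hbij : Function.Bijective
      (TensorProduct.lift ((h.mul.domRestrict G).compl₂ K.subtype)))
    (p : H → Prop) (h0 : p 0) (hadd : ∀ x y, p x → p y → p (x + y))
    (hgen : ∀ g ∈ G, ∀ k ∈ K, p (h.mul g k)) : ∀ a, p a := by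
  intro a
  obtain ⟨t, rfl⟩ := hbij.2 a
  induction t using TensorProduct.induction_on with
  | zero => simpa using h0
  | tmul g k => simpa using hgen g g.2 k k.2
  | add x y hx hy => rw [map_add]; exact hadd _ _ hx hy

/-- A representation indexed by `Fin n` (to avoid universe issues). -/
noncomputable def finRepr {a : H} (n : ℕ) (l r : Fin n → H)
    (he : ∑ i, l i ⊗ₜ[R] r i = CoalgebraStruct.comul a) : Coalgebra.Repr R a (Fin n) :=
  ⟨(Finset.univ : Finset (Fin n)), l, r, he⟩

/-- A representation with all legs in a submodule. -/
lemma exists_memRepr (P : Submodule R H) {a : H}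
    (ha : comul (R := R) a ∈ LinearMap.range (TensorProduct.map P.subtype P.subtype)) :
    ∃ (n : ℕ) (l r : Fin n → H), (∀ i, l i ∈ P ∧ r i ∈ P) ∧
      ∑ i, l i ⊗ₜ[R] r i = CoalgebraStruct.comul a := by
  obtain ⟨t, ht⟩ := ha
  obtain ⟨s, rfl⟩ := TensorProduct.exists_finset t
  refine ⟨s.card, fun i => ((s.equivFin.symm i : ↥s) : ↥P × ↥P).1,
    fun i => ((s.equivFin.symm i : ↥s) : ↥P × ↥P).2,
    fun i => ⟨Subtype.prop _, Subtype.prop _⟩, ?_⟩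
  rw [← ht, map_sum]
  calc ∑ i, (((s.equivFin.symm i : ↥s) : ↥P × ↥P).1 : H) ⊗ₜ[R]
        (((s.equivFin.symm i : ↥s) : ↥P × ↥P).2 : H)
      = ∑ z : {x // x ∈ s}, ((z : ↥P × ↥P).1 : H) ⊗ₜ[R] ((z : ↥P × ↥P).2 : H) :=
        Equiv.sum_comp s.equivFin.symm
          (fun z : {x // x ∈ s} => ((z : ↥P × ↥P).1 : H) ⊗ₜ[R] ((z : ↥P × ↥P).2 : H))
    _ = ∑ p ∈ s, ((p.1 : H) ⊗ₜ[R] (p.2 : H)) :=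
        Finset.sum_coe_sort s (fun p : ↥P × ↥P => ((p.1 : H) ⊗ₜ[R] (p.2 : H)))
    _ = ∑ p ∈ s, TensorProduct.map P.subtype P.subtype (p.1 ⊗ₜ[R] p.2) := by simp

lemma hmul_smul_left (c : R) (x y : H) : h.mul (c • x) y = c • h.mul x y := by
  rw [map_smul, LinearMap.smul_apply]

lemma hmul_smul_right (c : R) (x y : H) : h.mul x (c • y) = c • h.mul x y :=
  map_smul _ _ _

variable (Bmap : H →ₗ[R] H)

/-- The canonical element `∑ a₁ ⊗ (a₂ ⊗ a₃)`. -/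
noncomputable def W3 (a : H) : H ⊗[R] (H ⊗[R] H) :=
  (comul (R := R) (A := H)).lTensor H (comul (R := R) a)

/-- The trilinear map `x ⊗ y ⊗ z ↦ B(((x · B(y)) · b) · S(B(z)))`. -/
noncomputable def Fb (b : H) : H ⊗[R] (H ⊗[R] H) →ₗ[R] H :=
  Bmap ∘ₗ M h ∘ₗ ((h.mul).flip b ∘ₗ M h).rTensor H ∘ₗ
    ↑(TensorProduct.assoc R H H H).symm ∘ₗ
    (TensorProduct.map Bmap (h.S ∘ₗ Bmap)).lTensor H

lemma Fb_tmul (b x y z : H) :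
    Fb h Bmap b (x ⊗ₜ[R] (y ⊗ₜ[R] z))
      = Bmap (h.mul (h.mul (h.mul x (Bmap y)) b) (h.S (Bmap z))) := by
  simp [Fb]

lemma rb_sum (a b : H) {ι : Type*} (r : Coalgebra.Repr R a ι)
    {κ : ι → Type*} (r2 : ∀ i : ι, Coalgebra.Repr R (r.right i) (κ i)) :
    ∑ i ∈ r.index, ∑ j ∈ (r2 i).index,
        Bmap (h.mul (h.mul (h.mul (r.left i) (Bmap ((r2 i).left j))) b)
          (h.S (Bmap ((r2 i).right j))))
      = Fb h Bmap b (W3 a) := by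
  have hW : W3 (R := R) a = ∑ i ∈ r.index, ∑ j ∈ (r2 i).index,
      r.left i ⊗ₜ[R] ((r2 i).left j ⊗ₜ[R] (r2 i).right j) := by
    rw [W3, ← r.eq, map_sum]
    refine Finset.sum_congr rfl fun i _ => ?_
    rw [LinearMap.lTensor_tmul, ← (r2 i).eq, TensorProduct.tmul_sum]
  rw [hW, map_sum]
  refine Finset.sum_congr rfl fun i _ => ?_
  rw [map_sum]
  exact Finset.sum_congr rfl fun j _ => (Fb_tmul h Bmap b _ _ _).symm

variable (G K : Submodule R H)

/-- The counit property of `B`. -/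
lemma B_counit
    (hbij : Function.Bijective
      (TensorProduct.lift ((h.mul.domRestrict G).compl₂ K.subtype)))
    (hB : ∀ (g : G) (k : K),
      Bmap (h.mul (g : H) (k : H)) = counit (R := R) (g : H) • h.S (k : H)) :
    ∀ a : H, counit (R := R) (Bmap a) = counit (R := R) a := by
  refine gen_induction h G K hbij _ (by simp) (fun x y hx hy => by
    simp only [map_add, hx, hy]) ?_
  intro g hg k hk
  rw [hB ⟨g, hg⟩ ⟨k, hk⟩]
  simp only [map_smul, counit_S h, smul_eq_mul]
  rw [h.counit_mul]

/-- The comultiplication property of `B`. -/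
lemma B_comul (hc : Cocomm R H)
    (hGcomul : ∀ a ∈ G, comul (R := R) a ∈
      LinearMap.range (TensorProduct.map G.subtype G.subtype))
    (hKcomul : ∀ a ∈ K, comul (R := R) a ∈
      LinearMap.range (TensorProduct.map K.subtype K.subtype))
    (hbij : Function.Bijective
      (TensorProduct.lift ((h.mul.domRestrict G).compl₂ K.subtype)))
    (hB : ∀ (g : G) (k : K),
      Bmap (h.mul (g : H) (k : H)) = counit (R := R) (g : H) • h.S (k : H)) :
    ∀ a : H, comul (R := R) (Bmap a)
      = TensorProduct.map Bmap Bmap (comul (R := R) a) := by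
  refine gen_induction h G K hbij _ (by simp) (fun x y hx hy => by
    simp only [map_add, hx, hy]) ?_
  intro g hg k hk
  obtain ⟨ng, lg, rg0, hgmem, hgeq⟩ := exists_memRepr G (hGcomul g hg)
  obtain ⟨nk, lk, rk0, hkmem, hkeq⟩ := exists_memRepr K (hKcomul k hk)
  set rg : Coalgebra.Repr R g (Fin ng) := finRepr ng lg rg0 hgeq with hrgdef
  set rk : Coalgebra.Repr R k (Fin nk) := finRepr nk lk rk0 hkeq with hrkdef
  have hrg : ∀ i : Fin ng, rg.left i ∈ G ∧ rg.right i ∈ G := fun i => hgmem i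
  have hrk : ∀ i : Fin nk, rk.left i ∈ K ∧ rk.right i ∈ K := fun i => hkmem i
  have hBgk : ∀ (x y : H), x ∈ G → y ∈ K →
      Bmap (h.mul x y) = counit (R := R) x • h.S y := fun x y hx hy =>
    hB ⟨x, hx⟩ ⟨y, hy⟩
  calc comul (R := R) (Bmap (h.mul g k))
      = counit (R := R) g • TensorProduct.map h.S h.S (comul (R := R) k) := by
        rw [hBgk g k hg hk, map_smul, comul_S h hc]
    _ = ∑ i ∈ rg.index, ∑ j ∈ rk.index,
          (counit (R := R) (rg.left i) * counit (R := R) (rg.right i)) •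
            (h.S (rk.left j) ⊗ₜ[R] h.S (rk.right j)) := by
        rw [← sum_counit_mul rg, ← rk.eq]
        simp only [map_sum, TensorProduct.map_tmul, Finset.sum_smul, Finset.smul_sum]
        exact Finset.sum_comm
    _ = ∑ i ∈ rg.index, ∑ j ∈ rk.index,
          (counit (R := R) (rg.left i) • h.S (rk.left j)) ⊗ₜ[R]
            (counit (R := R) (rg.right i) • h.S (rk.right j)) := by
        refine Finset.sum_congr rfl fun i _ => Finset.sum_congr rfl fun j _ => ?_
        rw [mul_smul, ← TensorProduct.tmul_smul, TensorProduct.smul_tmul']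
    _ = ∑ i ∈ rg.index, ∑ j ∈ rk.index,
          Bmap (h.mul (rg.left i) (rk.left j)) ⊗ₜ[R]
            Bmap (h.mul (rg.right i) (rk.right j)) := by
        refine Finset.sum_congr rfl fun i _ => Finset.sum_congr rfl fun j _ => ?_
        rw [hBgk _ _ (hrg i).1 (hrk j).1, hBgk _ _ (hrg i).2 (hrk j).2]
    _ = TensorProduct.map Bmap Bmap (comul (R := R) (h.mul g k)) := by
        rw [comul_mul' h g k rg rk]
        simp only [map_sum, TensorProduct.map_tmul]

/-- The core Rota-Baxter identity. -/
lemma B_core (hc : Cocomm R H)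
    (hGmul : ∀ a ∈ G, ∀ b ∈ G, h.mul a b ∈ G)
    (hGcomul : ∀ a ∈ G, comul (R := R) a ∈
      LinearMap.range (TensorProduct.map G.subtype G.subtype))
    (hKmul : ∀ a ∈ K, ∀ b ∈ K, h.mul a b ∈ K)
    (hKcomul : ∀ a ∈ K, comul (R := R) a ∈
      LinearMap.range (TensorProduct.map K.subtype K.subtype))
    (hbij : Function.Bijective
      (TensorProduct.lift ((h.mul.domRestrict G).compl₂ K.subtype)))
    (hB : ∀ (g : G) (k : K),
      Bmap (h.mul (g : H) (k : H)) = counit (R := R) (g : H) • h.S (k : H)) :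
    ∀ a b : H, h.mul (Bmap a) (Bmap b) = Fb h Bmap b (W3 a) := by
  have hBgk : ∀ (x y : H), x ∈ G → y ∈ K →
      Bmap (h.mul x y) = counit (R := R) x • h.S y := fun x y hx hy =>
    hB ⟨x, hx⟩ ⟨y, hy⟩
  refine gen_induction h G K hbij
    (fun a => ∀ b : H, h.mul (Bmap a) (Bmap b) = Fb h Bmap b (W3 a))
    (fun b => by simp [W3]) (fun x y hx hy b => by
      simp only [W3] at hx hy ⊢
      simp only [map_add, LinearMap.add_apply, hx, hy]) ?_
  intro g hg k hk b
  -- Step A : `Fb b (W3 (g k)) = B ((g b) k)`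
  obtain ⟨ng, lg, rg0, hgmem, hgeq⟩ := exists_memRepr G (hGcomul g hg)
  obtain ⟨nk, lk, rk0, hkmem, hkeq⟩ := exists_memRepr K (hKcomul k hk)
  set rg : Coalgebra.Repr R g (Fin ng) := finRepr ng lg rg0 hgeq with hrgdef
  set rk : Coalgebra.Repr R k (Fin nk) := finRepr nk lk rk0 hkeq with hrkdef
  have hrg : ∀ i : Fin ng, rg.left i ∈ G ∧ rg.right i ∈ G := fun i => hgmem i
  have hrk : ∀ i : Fin nk, rk.left i ∈ K ∧ rk.right i ∈ K := fun i => hkmem i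
  choose ng2 lg2 rg20 hg2mem hg2eq using
    fun i : Fin ng => exists_memRepr G (hGcomul _ (hrg i).2)
  choose nk2 lk2 rk20 hk2mem hk2eq using
    fun j : Fin nk => exists_memRepr K (hKcomul _ (hrk j).2)
  set rg2 : ∀ i : Fin ng, Coalgebra.Repr R (rg.right i) (Fin (ng2 i)) :=
    fun i => finRepr (ng2 i) (lg2 i) (rg20 i) (hg2eq i) with hrg2def
  set rk2 : ∀ j : Fin nk, Coalgebra.Repr R (rk.right j) (Fin (nk2 j)) :=
    fun j => finRepr (nk2 j) (lk2 j) (rk20 j) (hk2eq j) with hrk2def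
  have hrg2 : ∀ (i : Fin ng) (m : Fin (ng2 i)),
      (rg2 i).left m ∈ G ∧ (rg2 i).right m ∈ G := fun i m => hg2mem i m
  have hrk2 : ∀ (j : Fin nk) (n : Fin (nk2 j)),
      (rk2 j).left n ∈ K ∧ (rk2 j).right n ∈ K := fun j n => hk2mem j n
  set rk1 : ∀ j : Fin nk, Coalgebra.Repr R (rk.left j) (H × H) :=
    fun j => Coalgebra.Repr.arbitrary R (rk.left j)
  have stepA : Fb h Bmap b (W3 (h.mul g k)) = Bmap (h.mul (h.mul g b) k) := by
    have hW : W3 (R := R) (h.mul g k)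
        = ∑ i ∈ rg.index, ∑ j ∈ rk.index, ∑ m ∈ (rg2 i).index, ∑ n ∈ (rk2 j).index,
            h.mul (rg.left i) (rk.left j) ⊗ₜ[R]
              (h.mul ((rg2 i).left m) ((rk2 j).left n) ⊗ₜ[R]
                h.mul ((rg2 i).right m) ((rk2 j).right n)) := by
      rw [W3, comul_mul' h g k rg rk]
      simp only [map_sum, LinearMap.lTensor_tmul]
      refine Finset.sum_congr rfl fun i _ => Finset.sum_congr rfl fun j _ => ?_
      rw [comul_mul' h _ _ (rg2 i) (rk2 j)]
      rw [TensorProduct.tmul_sum]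
      exact Finset.sum_congr rfl fun m _ => TensorProduct.tmul_sum _ _ _
    rw [hW, map_sum]
    calc ∑ i ∈ rg.index, Fb h Bmap b
            (∑ j ∈ rk.index, ∑ m ∈ (rg2 i).index, ∑ n ∈ (rk2 j).index,
              h.mul (rg.left i) (rk.left j) ⊗ₜ[R]
                (h.mul ((rg2 i).left m) ((rk2 j).left n) ⊗ₜ[R]
                  h.mul ((rg2 i).right m) ((rk2 j).right n)))
        = ∑ i ∈ rg.index, ∑ j ∈ rk.index, ∑ m ∈ (rg2 i).index, ∑ n ∈ (rk2 j).index,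
            (counit (R := R) ((rg2 i).left m) * counit (R := R) ((rg2 i).right m)) •
              Bmap (h.mul (h.mul (h.mul (h.mul (rg.left i) (rk.left j))
                (h.S ((rk2 j).left n))) b) ((rk2 j).right n)) := by
          refine Finset.sum_congr rfl fun i _ => ?_
          rw [map_sum]
          refine Finset.sum_congr rfl fun j _ => ?_
          rw [map_sum]
          refine Finset.sum_congr rfl fun m _ => ?_
          rw [map_sum]
          refine Finset.sum_congr rfl fun n _ => ?_
          rw [Fb_tmul]
          rw [hBgk _ _ (hrg2 i m).1 (hrk2 j n).1, hBgk _ _ (hrg2 i m).2 (hrk2 j n).2]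
          rw [map_smul h.S, S_S h hc]
          simp only [hmul_smul_left, hmul_smul_right, map_smul, LinearMap.smul_apply,
            smul_smul]
          rw [mul_comm]
      _ = ∑ i ∈ rg.index, ∑ j ∈ rk.index, ∑ n ∈ (rk2 j).index,
            counit (R := R) (rg.right i) •
              Bmap (h.mul (h.mul (h.mul (h.mul (rg.left i) (rk.left j))
                (h.S ((rk2 j).left n))) b) ((rk2 j).right n)) := by
          refine Finset.sum_congr rfl fun i _ => Finset.sum_congr rfl fun j _ => ?_
          rw [Finset.sum_comm]
          refine Finset.sum_congr rfl fun n _ => ?_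
          rw [← Finset.sum_smul, sum_counit_mul (rg2 i)]
      _ = ∑ j ∈ rk.index, ∑ n ∈ (rk2 j).index,
            Bmap (h.mul (h.mul (h.mul (h.mul g (rk.left j))
              (h.S ((rk2 j).left n))) b) ((rk2 j).right n)) := by
          rw [Finset.sum_comm]
          refine Finset.sum_congr rfl fun j _ => ?_
          rw [Finset.sum_comm]
          refine Finset.sum_congr rfl fun n _ => ?_
          calc ∑ i ∈ rg.index, counit (R := R) (rg.right i) •
                Bmap (h.mul (h.mul (h.mul (h.mul (rg.left i) (rk.left j))
                  (h.S ((rk2 j).left n))) b) ((rk2 j).right n))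
              = Bmap (h.mul (h.mul (h.mul (h.mul
                  (∑ i ∈ rg.index, counit (R := R) (rg.right i) • rg.left i)
                  (rk.left j)) (h.S ((rk2 j).left n))) b) ((rk2 j).right n)) := by
                simp only [map_sum, LinearMap.sum_apply]
                refine (Finset.sum_congr rfl fun i _ => ?_).symm
                simp only [hmul_smul_left, map_smul, LinearMap.smul_apply]
            _ = Bmap (h.mul (h.mul (h.mul (h.mul g (rk.left j))
                  (h.S ((rk2 j).left n))) b) ((rk2 j).right n)) := by
                rw [sum_smul_counit rg]
      _ = ∑ j ∈ rk.index, ∑ n ∈ (rk1 j).index,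
            Bmap (h.mul (h.mul (h.mul (h.mul g ((rk1 j).left n))
              (h.S ((rk1 j).right n))) b) (rk.right j)) := by
          set Ψ : H ⊗[R] (H ⊗[R] H) →ₗ[R] H :=
            Bmap ∘ₗ M h ∘ₗ ((h.mul).flip b ∘ₗ M h).rTensor H ∘ₗ
              ↑(TensorProduct.assoc R H H H).symm ∘ₗ
              TensorProduct.map (h.mul g) ((h.S).rTensor H) with hΨ
          have hΨval : ∀ u v w : H, Ψ (u ⊗ₜ[R] (v ⊗ₜ[R] w))
              = Bmap (h.mul (h.mul (h.mul (h.mul g u) (h.S v)) b) w) := by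
            intro u v w; simp [hΨ]
          have key := congrArg Ψ (Coalgebra.sum_tmul_tmul_eq rk rk1 rk2)
          simp only [map_sum, hΨval] at key
          exact key.symm
      _ = ∑ j ∈ rk.index,
            counit (R := R) (rk.left j) • Bmap (h.mul (h.mul g b) (rk.right j)) := by
          refine Finset.sum_congr rfl fun j _ => ?_
          calc ∑ n ∈ (rk1 j).index,
                Bmap (h.mul (h.mul (h.mul (h.mul g ((rk1 j).left n))
                  (h.S ((rk1 j).right n))) b) (rk.right j))
              = Bmap (h.mul (h.mul (h.mul g (∑ n ∈ (rk1 j).index,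
                  h.mul ((rk1 j).left n) (h.S ((rk1 j).right n)))) b) (rk.right j)) := by
                simp only [map_sum, LinearMap.sum_apply]
                refine (Finset.sum_congr rfl fun n _ => ?_).symm
                rw [← h.mul_assoc g]
            _ = counit (R := R) (rk.left j) •
                  Bmap (h.mul (h.mul g b) (rk.right j)) := by
                rw [S_mul_right' h (rk1 j), hmul_smul_right, h.mul_one,
                  hmul_smul_left, hmul_smul_left, map_smul]
      _ = Bmap (h.mul (h.mul g b) k) := by
          conv_rhs => rw [show (k : H) = ∑ j ∈ rk.index,
            counit (R := R) (rk.left j) • rk.right j from (sum_counit_smul rk).symm]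
          simp only [map_sum, hmul_smul_right, map_smul]
  -- Step B : reduce `b`
  have stepB : ∀ b : H, counit (R := R) g • h.mul (h.S k) (Bmap b)
      = Bmap (h.mul (h.mul g b) k) := by
    refine gen_induction h G K hbij
      (fun b => counit (R := R) g • h.mul (h.S k) (Bmap b)
        = Bmap (h.mul (h.mul g b) k)) (by simp [h.mul_one]) ?_ ?_
    · intro x y hx hy
      simp only [map_add, LinearMap.add_apply, smul_add, hx, hy]
    · intro g' hg' k' hk'
      calc counit (R := R) g • h.mul (h.S k) (Bmap (h.mul g' k'))
          = counit (R := R) g • h.mul (h.S k)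
              (counit (R := R) g' • h.S k') := by rw [hBgk g' k' hg' hk']
        _ = (counit (R := R) (h.mul g g')) • h.S (h.mul k' k) := by
            rw [hmul_smul_right, S_mul h, h.counit_mul, smul_smul]
        _ = Bmap (h.mul (h.mul g g') (h.mul k' k)) := by
            rw [hBgk _ _ (hGmul g hg g' hg') (hKmul k' hk' k hk)]
        _ = Bmap (h.mul (h.mul g (h.mul g' k')) k) := by
            rw [← h.mul_assoc (h.mul g g'), h.mul_assoc g g' k']
  -- conclude
  calc h.mul (Bmap (h.mul g k)) (Bmap b)
      = counit (R := R) g • h.mul (h.S k) (Bmap b) := by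
        rw [hBgk g k hg hk, hmul_smul_left]
    _ = Bmap (h.mul (h.mul g b) k) := stepB b
    _ = Fb h Bmap b (W3 (h.mul g k)) := stepA.symm

end Main


end FactRB
/-- If `H = GK` for Hopf subalgebras `G, K ⊆ H` with the multiplication map
`G ⊗ K → H` a linear isomorphism, then `B(hg) := ε(h)S(g)` (for `h ∈ G`, `g ∈ K`)
is a well-defined Rota-Baxter operator on `H`. -/
theorem factorization_rotaBaxter (h : HopfMul R H) (hc : Cocomm R H)
    (G K : Submodule R H)
    (hGone : h.one ∈ G) (hGmul : ∀ a ∈ G, ∀ b ∈ G, h.mul a b ∈ G)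
    (hGS : ∀ a ∈ G, h.S a ∈ G)
    (hGcomul : ∀ a ∈ G, comul (R := R) a ∈
      LinearMap.range (TensorProduct.map G.subtype G.subtype))
    (hKone : h.one ∈ K) (hKmul : ∀ a ∈ K, ∀ b ∈ K, h.mul a b ∈ K)
    (hKS : ∀ a ∈ K, h.S a ∈ K)
    (hKcomul : ∀ a ∈ K, comul (R := R) a ∈
      LinearMap.range (TensorProduct.map K.subtype K.subtype))
    (hbij : Function.Bijective
      (TensorProduct.lift ((h.mul.domRestrict G).compl₂ K.subtype)))
    (Bmap : H →ₗ[R] H)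
    (hB : ∀ (g : G) (k : K),
      Bmap (h.mul (g : H) (k : H)) = counit (R := R) (g : H) • h.S (k : H)) :
    ∃ rb : RotaBaxter R H h, rb.B = Bmap := by
  refine ⟨⟨Bmap, ?_, ?_, ?_⟩, rfl⟩
  · intro a _ r
    rw [FactRB.B_comul h Bmap G K hc hGcomul hKcomul hbij hB a,
      ← FactRB.repr_map_sum r (TensorProduct.map Bmap Bmap)]
    simp
  · exact FactRB.B_counit h Bmap G K hbij hB
  · intro a b _ r _ r2
    rw [FactRB.B_core h Bmap G K hc hGmul hGcomul hKmul hKcomul hbij hB a b]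
    exact (FactRB.rb_sum h Bmap a b r r2).symm
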